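/- The differential ring homomorphism φ : K ⊗_C E → K ⊗_C R defined by φ(a ⊗ d) = (a ⊗ 1)·d is injective. -/

import Mathlib

set_option synthInstance.maxHeartbeats 1000000
set_option maxHeartbeats 1000000

open TensorProduct

section Preliminaries

variable (C K R : Type) [Field C] [Field K] [Algebra C K] [CommRing R] [Algebra C R]

/-- The map `δ(x ⊗ y) = δK x ⊗ y + x ⊗ δR y` on `K ⊗[C] R`, as a `C`-linear map. -/
noncomputable def tensorDerMap (dK : Derivation C K K) (dR : Derivation C R R) :
    K ⊗[C] R →ₗ[C] K ⊗[C] R :=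
  LinearMap.rTensor R dK.toLinearMap + LinearMap.lTensor K dR.toLinearMap

lemma tensorDerMap_tmul (dK : Derivation C K K) (dR : Derivation C R R) (a : K) (b : R) :
    tensorDerMap C K R dK dR (a ⊗ₜ b) = dK a ⊗ₜ b + a ⊗ₜ dR b := by
  simp [tensorDerMap]

lemma tensorDerMap_leibniz (dK : Derivation C K K) (dR : Derivation C R R) (x y : K ⊗[C] R) :
    tensorDerMap C K R dK dR (x * y)
      = x * tensorDerMap C K R dK dR y + y * tensorDerMap C K R dK dR x := by
  induction x using TensorProduct.induction_on with
  | zero => simp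
  | tmul a b =>
    induction y using TensorProduct.induction_on with
    | zero => simp
    | tmul c d =>
      simp only [Algebra.TensorProduct.tmul_mul_tmul, tensorDerMap_tmul, Derivation.leibniz,
        smul_eq_mul, TensorProduct.add_tmul, TensorProduct.tmul_add, mul_add]
      rw [mul_comm d b, mul_comm c a]
      ring_nf
    | add y1 y2 h1 h2 =>
      simp only [mul_add, map_add, h1, h2]
      ring_nf
  | add x1 x2 h1 h2 =>
    simp only [add_mul, map_add, h1, h2]
    ring_nf

/-- The extension of the derivations `dK` and `dR` to `K ⊗[C] R`,
`δ(x ⊗ y) = δ(x) ⊗ y + x ⊗ δ(y)`, as a bona fide derivation. -/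
noncomputable def tensorDer (dK : Derivation C K K) (dR : Derivation C R R) :
    Derivation C (K ⊗[C] R) (K ⊗[C] R) :=
  Derivation.mk' (tensorDerMap C K R dK dR) (by
    intro a b
    simpa [smul_eq_mul] using tensorDerMap_leibniz C K R dK dR a b)

end Preliminaries

section Constants

variable (C : Type) [Field C] (A : Type) [CommRing A] [Algebra C A]

/-- The subring (subalgebra) of constants of a differential ring. -/
def constantsSubalgebra (ι : Type) (D : ι → Derivation C A A) : Subalgebra C A where
  carrier := {x | ∀ i, D i x = 0}
  mul_mem' := by intro a b ha hb i; simp [Derivation.leibniz, ha i, hb i]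
  add_mem' := by intro a b ha hb i; simp [ha i, hb i]
  algebraMap_mem' := by intro c i; simp

end Constants

section LeveltMap

variable (C K R : Type) [Field C] [Field K] [Algebra C K] [CommRing R] [Algebra C R]
variable (ι : Type) (dK : ι → Derivation C K K) (dR : ι → Derivation C R R)

/-- `E`, the differential subring of constants of `K ⊗[C] R`. -/
noncomputable def constantsE : Subalgebra C (K ⊗[C] R) :=
  constantsSubalgebra C (K ⊗[C] R) ι (fun i => tensorDer C K R (dK i) (dR i))

/-- Levelt's differential ring homomorphism `φ : K ⊗[C] E → K ⊗[C] R`,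
`φ(a ⊗ d) = (a ⊗ 1)·d`. -/
noncomputable def leveltMap :
    (K ⊗[C] (constantsE C K R ι dK dR)) →ₐ[C] K ⊗[C] R :=
  Algebra.TensorProduct.productMap
    (Algebra.TensorProduct.includeLeft : K →ₐ[C] K ⊗[C] R)
    (constantsE C K R ι dK dR).val

end LeveltMap

section Aux

variable (C K R : Type) [Field C] [Field K] [Algebra C K] [CommRing R] [Algebra C R]

lemma smul_eq_tmul_mul (k : K) (x : K ⊗[C] R) : k • x = (k ⊗ₜ[C] (1 : R)) * x := by
  rw [Algebra.smul_def, Algebra.TensorProduct.algebraMap_apply, Algebra.algebraMap_self_apply]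

lemma tensorDer_smul_const (dK : Derivation C K K) (dR : Derivation C R R)
    (k : K) (e : K ⊗[C] R) (he : tensorDer C K R dK dR e = 0) :
    tensorDer C K R dK dR (k • e) = (dK k) • e := by
  rw [smul_eq_tmul_mul, Derivation.leibniz, he, smul_eq_mul, smul_eq_mul, mul_zero, zero_add]
  have h1 : tensorDer C K R dK dR (k ⊗ₜ[C] (1 : R)) = dK k ⊗ₜ (1 : R) := by
    show tensorDerMap C K R dK dR (k ⊗ₜ (1 : R)) = _
    rw [tensorDerMap_tmul, Derivation.map_one_eq_zero, TensorProduct.tmul_zero, add_zero]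
  rw [h1, smul_eq_tmul_mul, mul_comm]

variable (ι : Type) (δK : ι → Derivation C K K) (δR : ι → Derivation C R R)

lemma key_linearIndependent
    (hconst : ∀ x : K, (∀ i, δK i x = 0) → ∃ c : C, algebraMap C K c = x)
    {η : Type} (v : η → K ⊗[C] R)
    (hv : ∀ m j, tensorDer C K R (δK j) (δR j) (v m) = 0)
    (hind : LinearIndependent C v) :
    LinearIndependent K v := by
  classical
  rw [linearIndependent_iff']
  intro s
  induction s using Finset.strongInduction with
  | _ s IH =>
    intro g hg i hi
    by_contra hgi
    set h : η → K := fun m => (g i)⁻¹ * g m with hh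
    have hhi : h i = 1 := inv_mul_cancel₀ hgi
    have hrel : ∑ m ∈ s, h m • v m = 0 := by
      have : ∑ m ∈ s, h m • v m = (g i)⁻¹ • ∑ m ∈ s, g m • v m := by
        rw [Finset.smul_sum]
        exact Finset.sum_congr rfl fun m _ => (smul_smul _ _ _).symm
      rw [this, hg, smul_zero]
    have hder : ∀ j m, m ∈ s → δK j (h m) = 0 := by
      intro j
      have h0 : ∑ m ∈ s, (δK j (h m)) • v m = 0 := by
        calc ∑ m ∈ s, (δK j (h m)) • v m
            = ∑ m ∈ s, tensorDer C K R (δK j) (δR j) (h m • v m) :=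
              Finset.sum_congr rfl fun m _ =>
                (tensorDer_smul_const C K R (δK j) (δR j) (h m) (v m) (hv m j)).symm
          _ = tensorDer C K R (δK j) (δR j) (∑ m ∈ s, h m • v m) := (map_sum _ _ _).symm
          _ = 0 := by rw [hrel]; exact map_zero _
      have h0' : ∑ m ∈ s.erase i, (δK j (h m)) • v m = 0 := by
        rw [Finset.sum_erase s (by rw [hhi, Derivation.map_one_eq_zero, zero_smul])]
        exact h0
      have := IH (s.erase i) (Finset.erase_ssubset hi) (fun m => δK j (h m)) h0'
      intro m hm
      rcases eq_or_ne m i with rfl | hne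
      · rw [hhi, Derivation.map_one_eq_zero]
      · exact this m (Finset.mem_erase.mpr ⟨hne, hm⟩)
    set H : η → K := fun m => if m ∈ s then h m else 0 with hH
    have hHconst : ∀ m, ∃ c : C, algebraMap C K c = H m := by
      intro m
      by_cases hm : m ∈ s
      · exact hconst (H m) (by intro j; simp only [hH, if_pos hm]; exact hder j m hm)
      · exact ⟨0, by simp [hH, if_neg hm]⟩
    choose c hc using hHconst
    have hcrel : ∑ m ∈ s, c m • v m = 0 := by
      calc ∑ m ∈ s, c m • v m = ∑ m ∈ s, h m • v m := by
            refine Finset.sum_congr rfl fun m hm => ?_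
            rw [← algebraMap_smul K (c m) (v m), hc m]
            simp [hH, if_pos hm]
        _ = 0 := hrel
    have hci : c i = 0 := linearIndependent_iff'.mp hind s c hcrel i hi
    have : (1 : K) = 0 := by
      rw [← hhi]
      have : H i = h i := by simp [hH, if_pos hi]
      rw [← this, ← hc i, hci, map_zero]
    exact one_ne_zero this

end Aux

/-- `C` algebraically closed of characteristic zero, `R` an integral domain
containing `C` with a finite set of commuting derivations vanishing on `C`, `K` its field of
fractions with the derivations extended in the standard way, with field of constants exactly `C`.
The derivations are extended to `K ⊗[C] R` by `δ(x ⊗ y) = δ(x) ⊗ y + x ⊗ δ(y)` and `E` is the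
differential subring of constants of `K ⊗[C] R`.  Then the differential ring homomorphism
`φ : K ⊗[C] E → K ⊗[C] R`, `φ(a ⊗ d) = (a ⊗ 1)·d`, is injective. -/
theorem leveltMap_injective
    (C R K : Type) [Field C] [IsAlgClosed C] [CharZero C]
    [CommRing R] [IsDomain R] [Algebra C R]
    [Field K] [Algebra C K] [Algebra R K] [IsScalarTower C R K] [IsFractionRing R K]
    (ι : Type) [Fintype ι]
    (δR : ι → Derivation C R R) (δK : ι → Derivation C K K)
    (hcomm : ∀ i j : ι, ∀ x : K, δK i (δK j x) = δK j (δK i x))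
    (hext : ∀ i : ι, ∀ r : R, δK i (algebraMap R K r) = algebraMap R K (δR i r))
    (hconst : ∀ x : K, (∀ i, δK i x = 0) → ∃ c : C, algebraMap C K c = x) :
    Function.Injective (leveltMap C K R ι δK δR) := by
  classical
  set E := constantsE C K R ι δK δR with hE
  let b := Module.Basis.ofVectorSpace C E
  -- the coercions into K ⊗ R are C-linearly independent
  have hindC : LinearIndependent C
      (fun m : Module.Basis.ofVectorSpaceIndex C E => ((b m : E) : K ⊗[C] R)) :=
    b.linearIndependent.map' (Subalgebra.toSubmodule E).subtype
      (Submodule.ker_subtype _)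
  have hvconst : ∀ (m : Module.Basis.ofVectorSpaceIndex C E) (j : ι),
      tensorDer C K R (δK j) (δR j) ((b m : E) : K ⊗[C] R) = 0 :=
    fun m j => (b m).2 j
  have hindK : LinearIndependent K
      (fun m : Module.Basis.ofVectorSpaceIndex C E => ((b m : E) : K ⊗[C] R)) :=
    key_linearIndependent C K R ι δK δR hconst _ hvconst hindC
  -- the K-linear version of the Levelt map
  have hsmulE : ∀ (k : K) (x : K ⊗[C] E), k • x = (k ⊗ₜ[C] (1 : E)) * x := by
    intro k x
    induction x using TensorProduct.induction_on with
    | zero => simp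
    | tmul a e => rw [TensorProduct.smul_tmul', Algebra.TensorProduct.tmul_mul_tmul,
        smul_eq_mul, one_mul]
    | add x y hx hy => rw [smul_add, mul_add, hx, hy]
  have hφ : ∀ (a : K) (e : E),
      leveltMap C K R ι δK δR (a ⊗ₜ[C] e) = (a ⊗ₜ[C] (1 : R)) * (e : K ⊗[C] R) := by
    intro a e
    simp [leveltMap, Algebra.TensorProduct.productMap_apply_tmul]
  let ψ : (K ⊗[C] E) →ₗ[K] K ⊗[C] R :=
    { toFun := leveltMap C K R ι δK δR
      map_add' := map_add _
      map_smul' := by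
        intro k x
        simp only [RingHom.id_apply]
        rw [hsmulE, map_mul, hφ, smul_eq_tmul_mul]
        simp }
  let B := b.baseChange K
  have hψB : ∀ m, ψ (B m) = ((b m : E) : K ⊗[C] R) := by
    intro m
    show leveltMap C K R ι δK δR (B m) = _
    rw [show B m = (1 : K) ⊗ₜ[C] (b m : E) from Module.Basis.baseChange_apply K b m, hφ]
    rw [← smul_eq_tmul_mul, one_smul]
  rw [injective_iff_map_eq_zero]
  intro z hz
  have hz' : Finsupp.linearCombination K (fun m => ψ (B m)) (B.repr z) = 0 := by
    have : (fun m => ψ (B m)) = ⇑ψ ∘ ⇑B := rfl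
    rw [this, ← Finsupp.apply_linearCombination, B.linearCombination_repr]
    exact hz
  have hrz : B.repr z = 0 := by
    apply linearIndependent_iff.mp _ _ hz'
    simpa only [funext hψB] using hindK
  have := congrArg B.repr.symm hrz
  simpa using this
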